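/- arXiv:2506.19821 — 3 statements merged into one kernel-verified Lean document; each statement's English description precedes it below -/
import Mathlib

section
/- Let A ∈ ℝ^{n×m} and let permutations σ_r of rows and σ_c of columns be given. Under the von Neumann neighborhood (each cell (k,ℓ) is neighbored by (k±1,ℓ) and (k,ℓ±1) when these indices lie in range), the total ℓ^p stress of the permuted matrix equals Σ_{j=1}^m Σ_{(i,k)∈A_N} 2|a_{ij} − a_{kj}|^p + Σ_{i=1}^n Σ_{(j,ℓ)∈A_M} 2|a_{ij} − a_{iℓ}|^p, where A_N is the set of consecutive pairs of rows in the ordering induced by σ_r and A_M the set of consecutive pairs of columns in the ordering induced by σ_c. -/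
open Finset

/-- Total ℓᵖ stress of a matrix `B` under the von Neumann neighborhood:
cells at Euclidean distance exactly 1. -/
noncomputable def stressVN (n m : ℕ) (p : ℝ) (B : Fin n → Fin m → ℝ) : ℝ :=
  ∑ k : Fin n, ∑ l : Fin m, ∑ k' : Fin n, ∑ l' : Fin m,
    if ((k' : ℤ) - (k : ℤ)) ^ 2 + ((l' : ℤ) - (l : ℤ)) ^ 2 = 1 then
      |B k l - B k' l'| ^ p
    else 0


lemma sq_cond_iff (a b c d : ℕ) :
    ((a:ℤ) - b)^2 + ((c:ℤ) - d)^2 = 1 ↔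
      (a = b ∧ c = d + 1) ∨ ((a = b ∧ d = c + 1) ∨ ((c = d ∧ a = b + 1) ∨ (c = d ∧ b = a + 1))) := by
  constructor
  · intro h
    have hx1 : -1 ≤ (a:ℤ) - b := by nlinarith [sq_nonneg ((c:ℤ)-d), sq_nonneg ((a:ℤ)-b+1)]
    have hx2 : (a:ℤ) - b ≤ 1 := by nlinarith [sq_nonneg ((c:ℤ)-d), sq_nonneg ((a:ℤ)-b-1)]
    have hy1 : -1 ≤ (c:ℤ) - d := by nlinarith [sq_nonneg ((a:ℤ)-b), sq_nonneg ((c:ℤ)-d+1)]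
    have hy2 : (c:ℤ) - d ≤ 1 := by nlinarith [sq_nonneg ((a:ℤ)-b), sq_nonneg ((c:ℤ)-d-1)]
    have hx : (a:ℤ) - b = -1 ∨ (a:ℤ) - b = 0 ∨ (a:ℤ) - b = 1 := by omega
    have hy : (c:ℤ) - d = -1 ∨ (c:ℤ) - d = 0 ∨ (c:ℤ) - d = 1 := by omega
    rcases hx with hx | hx | hx <;> rcases hy with hy | hy | hy <;>
      rw [hx, hy] at h <;> norm_num at h <;> omega
  · rintro (⟨h1,h2⟩|⟨h1,h2⟩|⟨h1,h2⟩|⟨h1,h2⟩) <;> subst_vars <;> push_cast <;> ring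

lemma ite_or_disjoint {P Q : Prop} [Decidable P] [Decidable Q] (h : ¬(P ∧ Q)) (x : ℝ) :
    (if P ∨ Q then x else 0) = (if P then x else 0) + (if Q then x else 0) := by
  by_cases hP : P <;> by_cases hQ : Q <;> simp_all

lemma sum_ite_const {α : Type*} [Fintype α] (P : Prop) [Decidable P] (f : α → ℝ) :
    ∑ a : α, (if P then f a else 0) = if P then ∑ a, f a else 0 := by
  split <;> simp

lemma ite_two_mul (P : Prop) [Decidable P] (x : ℝ) :
    (if P then 2 * x else 0) = (if P then x else 0) + (if P then x else 0) := by
  split <;> ring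

/-- The total ℓᵖ von Neumann stress of the matrix permuted by `(σr, σc)` equals the
sum over columns of `2|a_{ij} − a_{kj}|ᵖ` over consecutive row pairs, plus the sum
over rows of `2|a_{ij} − a_{iℓ}|ᵖ` over consecutive column pairs. -/
theorem stressVN_eq_consecutive_pairs (n m : ℕ) (p : ℝ) (hp : 1 ≤ p)
    (A : Fin n → Fin m → ℝ) (σr : Equiv.Perm (Fin n)) (σc : Equiv.Perm (Fin m)) :
    stressVN n m p (fun k l => A (σr.symm k) (σc.symm l)) =
      (∑ j : Fin m, ∑ i : Fin n, ∑ k : Fin n,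
        if (σr k : ℕ) = (σr i : ℕ) + 1 then 2 * |A i j - A k j| ^ p else 0)
      + (∑ i : Fin n, ∑ j : Fin m, ∑ l : Fin m,
        if (σc l : ℕ) = (σc j : ℕ) + 1 then 2 * |A i j - A i l| ^ p else 0) := by
  have hk : ∀ k' i : Fin n, (k' = i) ↔ ((σr k' : ℕ) = (σr i : ℕ)) :=
    fun k' i => ⟨fun h => by rw [h], fun h => σr.injective (Fin.val_injective h)⟩
  have hl : ∀ l' j : Fin m, (l' = j) ↔ ((σc l' : ℕ) = (σc j : ℕ)) :=
    fun l' j => ⟨fun h => by rw [h], fun h => σc.injective (Fin.val_injective h)⟩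
  have hconv : (∑ i : Fin n, ∑ j : Fin m, ∑ k : Fin n, ∑ l : Fin m,
      if ((σr k : ℤ) - (σr i : ℤ)) ^ 2 + ((σc l : ℤ) - (σc j : ℤ)) ^ 2 = 1 then
        |A i j - A k l| ^ p else 0) = stressVN n m p (fun k l => A (σr.symm k) (σc.symm l)) := by
    rw [stressVN]
    refine Fintype.sum_equiv σr _ _ fun i => ?_
    refine Fintype.sum_equiv σc _ _ fun j => ?_
    refine Fintype.sum_equiv σr _ _ fun k => ?_
    refine Fintype.sum_equiv σc _ _ fun l => ?_
    simp
  rw [← hconv]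
  have hsplit : ∀ (i k : Fin n) (j l : Fin m),
      (if ((σr k : ℤ) - (σr i : ℤ)) ^ 2 + ((σc l : ℤ) - (σc j : ℤ)) ^ 2 = 1 then
          |A i j - A k l| ^ p else 0)
      = (if k = i ∧ (σc l : ℕ) = (σc j : ℕ) + 1 then |A i j - A k l| ^ p else 0)
        + ((if k = i ∧ (σc j : ℕ) = (σc l : ℕ) + 1 then |A i j - A k l| ^ p else 0)
        + ((if l = j ∧ (σr k : ℕ) = (σr i : ℕ) + 1 then |A i j - A k l| ^ p else 0)
        + (if l = j ∧ (σr i : ℕ) = (σr k : ℕ) + 1 then |A i j - A k l| ^ p else 0))) := by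
    intro i k j l
    rw [if_congr (sq_cond_iff (σr k) (σr i) (σc l) (σc j)) rfl rfl,
      ite_or_disjoint (by omega), ite_or_disjoint (by omega), ite_or_disjoint (by omega),
      if_congr (and_congr_left' (hk k i)).symm rfl rfl,
      if_congr (and_congr_left' (hk k i)).symm rfl rfl,
      if_congr (and_congr_left' (hl l j)).symm rfl rfl,
      if_congr (and_congr_left' (hl l j)).symm rfl rfl]
  simp only [hsplit, Finset.sum_add_distrib, ite_and, sum_ite_const,
    Finset.sum_ite_eq', Finset.mem_univ, if_true]
  have hC2 : (∑ i : Fin n, ∑ j : Fin m, ∑ l : Fin m,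
      if (σc j : ℕ) = (σc l : ℕ) + 1 then |A i j - A i l| ^ p else 0)
      = ∑ i : Fin n, ∑ j : Fin m, ∑ l : Fin m,
      if (σc l : ℕ) = (σc j : ℕ) + 1 then |A i j - A i l| ^ p else 0 := by
    refine Finset.sum_congr rfl fun i _ => ?_
    rw [Finset.sum_comm]
    exact Finset.sum_congr rfl fun j _ => Finset.sum_congr rfl fun l _ => by rw [abs_sub_comm]
  have hR2 : (∑ i : Fin n, ∑ j : Fin m, ∑ k : Fin n,
      if (σr i : ℕ) = (σr k : ℕ) + 1 then |A i j - A k j| ^ p else 0)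
      = ∑ i : Fin n, ∑ j : Fin m, ∑ k : Fin n,
      if (σr k : ℕ) = (σr i : ℕ) + 1 then |A i j - A k j| ^ p else 0 := by
    calc (∑ i : Fin n, ∑ j : Fin m, ∑ k : Fin n,
        if (σr i : ℕ) = (σr k : ℕ) + 1 then |A i j - A k j| ^ p else 0)
        = ∑ i : Fin n, ∑ k : Fin n, ∑ j : Fin m,
          if (σr i : ℕ) = (σr k : ℕ) + 1 then |A i j - A k j| ^ p else 0 :=
        Finset.sum_congr rfl fun _ _ => Finset.sum_comm
      _ = ∑ k : Fin n, ∑ i : Fin n, ∑ j : Fin m,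
          if (σr i : ℕ) = (σr k : ℕ) + 1 then |A i j - A k j| ^ p else 0 := Finset.sum_comm
      _ = ∑ k : Fin n, ∑ j : Fin m, ∑ i : Fin n,
          if (σr i : ℕ) = (σr k : ℕ) + 1 then |A i j - A k j| ^ p else 0 :=
        Finset.sum_congr rfl fun _ _ => Finset.sum_comm
      _ = ∑ i : Fin n, ∑ j : Fin m, ∑ k : Fin n,
          if (σr k : ℕ) = (σr i : ℕ) + 1 then |A i j - A k j| ^ p else 0 :=
        Finset.sum_congr rfl fun k _ => Finset.sum_congr rfl fun j _ =>
          Finset.sum_congr rfl fun i _ => by rw [abs_sub_comm]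
  have hswap : (∑ j : Fin m, ∑ i : Fin n, ∑ k : Fin n,
      if (σr k : ℕ) = (σr i : ℕ) + 1 then |A i j - A k j| ^ p else 0)
      = ∑ i : Fin n, ∑ j : Fin m, ∑ k : Fin n,
      if (σr k : ℕ) = (σr i : ℕ) + 1 then |A i j - A k j| ^ p else 0 := Finset.sum_comm
  simp only [ite_two_mul, Finset.sum_add_distrib]
  rw [hC2, hR2, hswap]
  ring
end

section
/- Minimizing the total ℓ^p von Neumann stress over all pairs (σ_r, σ_c) of row and column permutations is equivalent to finding a minimum-weight Hamiltonian path in the complete graph on the rows with edge weights ω_{ik} = 2Σ_j |a_{ij} − a_{kj}|^p, and independently a minimum-weight Hamiltonian path in the complete graph on the columns with edge weights τ_{jℓ} = 2Σ_i |a_{ij} − a_{iℓ}|^p; in particular the optimal stress value equals the sum of the two minimum Hamiltonian path weights. -/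
open Finset

/-- Weight of the Hamiltonian path induced by the permutation `σ` on the complete
graph with edge weights `ω`: the sum of `ω i k` over consecutive pairs `(i, k)`. -/
noncomputable def pathWeight (n : ℕ) (ω : Fin n → Fin n → ℝ)
    (σ : Equiv.Perm (Fin n)) : ℝ :=
  ∑ i : Fin n, ∑ k : Fin n, if (σ k : ℕ) = (σ i : ℕ) + 1 then ω i k else 0

lemma sq_cond (a b : ℤ) : a^2 + b^2 = 1 ↔ (a^2 = 1 ∧ b = 0) ∨ (a = 0 ∧ b^2 = 1) := by
  constructor
  · intro h
    have ha0 : 0 ≤ a^2 := sq_nonneg a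
    have hb0 : 0 ≤ b^2 := sq_nonneg b
    have hcase : a^2 = 0 ∨ a^2 = 1 := by omega
    rcases hcase with h1 | h1
    · right
      refine ⟨by simpa using sq_eq_zero_iff.mp h1, by omega⟩
    · left
      refine ⟨h1, by simpa using sq_eq_zero_iff.mp (by omega : b^2 = 0)⟩
  · rintro (⟨h1, h2⟩ | ⟨h1, h2⟩) <;> simp [h1, h2]

lemma ite_split (a b : ℤ) (x : ℝ) :
    (if a^2 + b^2 = 1 then x else 0)
    = (if a^2 = 1 ∧ b = 0 then x else 0) + (if a = 0 ∧ b^2 = 1 then x else 0) := by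
  by_cases hA : a^2 = 1 ∧ b = 0
  · have h1 : a^2 + b^2 = 1 := by rw [hA.2]; simpa using hA.1
    have hB : ¬(a = 0 ∧ b^2 = 1) := by
      rintro ⟨h2, _⟩; rw [h2] at hA; simp at hA
    rw [if_pos h1, if_pos hA, if_neg hB, add_zero]
  · by_cases hB : a = 0 ∧ b^2 = 1
    · have h1 : a^2 + b^2 = 1 := by rw [hB.1]; simpa using hB.2
      rw [if_pos h1, if_pos hB, if_neg hA, zero_add]
    · have h1 : ¬(a^2 + b^2 = 1) := by rw [sq_cond]; tauto
      rw [if_neg h1, if_neg hA, if_neg hB, add_zero]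

lemma sum_collapse'' {α : Type*} [Fintype α] [DecidableEq α] (c : Prop) [Decidable c]
    (a : α) (f : α → ℝ) :
    (∑ x, if c ∧ x = a then f x else 0) = if c then f a else 0 := by
  by_cases hc : c <;> simp [hc]

lemma pair_sum (n : ℕ) (g : Fin n → Fin n → ℝ) (hg : ∀ i k, g i k = g k i) :
    (∑ k : Fin n, ∑ k' : Fin n, if ((k' : ℤ) - (k : ℤ))^2 = 1 then g k k' else 0)
    = ∑ i : Fin n, ∑ k : Fin n, if (k : ℕ) = (i : ℕ) + 1 then 2 * g i k else 0 := by
  have key : ∀ a b : Fin n, (((b:ℤ) - (a:ℤ))^2 = 1) ↔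
      ((b:ℕ) = (a:ℕ) + 1 ∨ (a:ℕ) = (b:ℕ) + 1) := by
    intro a b
    constructor
    · intro h
      have h2 : ((b:ℤ) - (a:ℤ)) * ((b:ℤ) - (a:ℤ)) = 1 := by nlinarith
      have := mul_self_eq_one_iff.mp h2
      omega
    · intro h
      have hd : (b:ℤ) - (a:ℤ) = 1 ∨ (b:ℤ) - (a:ℤ) = -1 := by omega
      rcases hd with hd | hd <;> rw [hd] <;> ring
  have split : ∀ a b : Fin n,
      (if ((b:ℤ) - (a:ℤ))^2 = 1 then g a b else 0)
      = (if (b:ℕ) = (a:ℕ) + 1 then g a b else 0)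
        + (if (a:ℕ) = (b:ℕ) + 1 then g a b else 0) := by
    intro a b
    by_cases h1 : (b:ℕ) = (a:ℕ) + 1
    · have h2 : ¬((a:ℕ) = (b:ℕ) + 1) := by omega
      rw [if_pos ((key a b).mpr (Or.inl h1)), if_pos h1, if_neg h2, add_zero]
    · by_cases h2 : (a:ℕ) = (b:ℕ) + 1
      · rw [if_pos ((key a b).mpr (Or.inr h2)), if_pos h2, if_neg h1, zero_add]
      · rw [if_neg (fun h => by rcases (key a b).mp h with h | h <;> omega),
          if_neg h1, if_neg h2, add_zero]
  calc (∑ k : Fin n, ∑ k' : Fin n, if ((k' : ℤ) - (k : ℤ))^2 = 1 then g k k' else 0)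
      = (∑ k : Fin n, ∑ k' : Fin n, if (k':ℕ) = (k:ℕ) + 1 then g k k' else 0)
        + (∑ k : Fin n, ∑ k' : Fin n, if (k:ℕ) = (k':ℕ) + 1 then g k k' else 0) := by
        rw [← Finset.sum_add_distrib]
        refine Finset.sum_congr rfl fun k _ => ?_
        rw [← Finset.sum_add_distrib]
        exact Finset.sum_congr rfl fun k' _ => split k k'
    _ = (∑ k : Fin n, ∑ k' : Fin n, if (k':ℕ) = (k:ℕ) + 1 then g k k' else 0)
        + (∑ k : Fin n, ∑ k' : Fin n, if (k':ℕ) = (k:ℕ) + 1 then g k k' else 0) := by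
        congr 1
        rw [Finset.sum_comm]
        refine Finset.sum_congr rfl fun k _ => Finset.sum_congr rfl fun k' _ => ?_
        rw [hg]
    _ = ∑ i : Fin n, ∑ k : Fin n, if (k : ℕ) = (i : ℕ) + 1 then 2 * g i k else 0 := by
        rw [← Finset.sum_add_distrib]
        refine Finset.sum_congr rfl fun k _ => ?_
        rw [← Finset.sum_add_distrib]
        refine Finset.sum_congr rfl fun k' _ => ?_
        by_cases h : (k':ℕ) = (k:ℕ) + 1 <;> simp [h] <;> ring

lemma pathWeight_reindex (n : ℕ) (ω : Fin n → Fin n → ℝ) (σ : Equiv.Perm (Fin n)) :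
    pathWeight n ω σ = ∑ i : Fin n, ∑ k : Fin n,
      if (k : ℕ) = (i : ℕ) + 1 then ω (σ.symm i) (σ.symm k) else 0 := by
  unfold pathWeight
  refine Fintype.sum_equiv σ _ _ fun i => ?_
  refine Fintype.sum_equiv σ _ _ fun k => ?_
  simp

lemma stress_split (n m : ℕ) (p : ℝ) (B : Fin n → Fin m → ℝ) :
    stressVN n m p B
    = (∑ k : Fin n, ∑ k' : Fin n, if ((k':ℤ)-(k:ℤ))^2 = 1
          then (∑ l : Fin m, |B k l - B k' l| ^ p) else 0)
      + (∑ l : Fin m, ∑ l' : Fin m, if ((l':ℤ)-(l:ℤ))^2 = 1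
          then (∑ k : Fin n, |B k l - B k l'| ^ p) else 0) := by
  have inner : ∀ (k : Fin n) (l : Fin m),
      (∑ k' : Fin n, ∑ l' : Fin m,
        if ((k':ℤ)-(k:ℤ))^2 + ((l':ℤ)-(l:ℤ))^2 = 1 then |B k l - B k' l'| ^ p else 0)
      = (∑ k' : Fin n, if ((k':ℤ)-(k:ℤ))^2 = 1 then |B k l - B k' l| ^ p else 0)
        + (∑ l' : Fin m, if ((l':ℤ)-(l:ℤ))^2 = 1 then |B k l - B k l'| ^ p else 0) := by
    intro k l
    have step1 : ∀ k' : Fin n,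
        (∑ l' : Fin m, if ((k':ℤ)-(k:ℤ))^2 + ((l':ℤ)-(l:ℤ))^2 = 1
            then |B k l - B k' l'| ^ p else 0)
        = (if ((k':ℤ)-(k:ℤ))^2 = 1 then |B k l - B k' l| ^ p else 0)
          + (if k' = k then
              (∑ l' : Fin m, if ((l':ℤ)-(l:ℤ))^2 = 1 then |B k l - B k' l'| ^ p else 0)
            else 0) := by
      intro k'
      have e1 : ∀ l' : Fin m,
          (if ((k':ℤ)-(k:ℤ))^2 + ((l':ℤ)-(l:ℤ))^2 = 1 then |B k l - B k' l'| ^ p else 0)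
          = (if (((k':ℤ)-(k:ℤ))^2 = 1 ∧ l' = l) then |B k l - B k' l'| ^ p else 0)
            + (if (k' = k ∧ ((l':ℤ)-(l:ℤ))^2 = 1) then |B k l - B k' l'| ^ p else 0) := by
        intro l'
        rw [ite_split ((k':ℤ)-(k:ℤ)) ((l':ℤ)-(l:ℤ))]
        congr 1
        · refine if_congr (and_congr Iff.rfl ?_) rfl rfl
          constructor
          · intro h; exact Fin.ext (by omega)
          · rintro rfl; ring
        · refine if_congr (and_congr ?_ Iff.rfl) rfl rfl
          constructor
          · intro h; exact Fin.ext (by omega)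
          · rintro rfl; ring
      have e2 : (∑ l' : Fin m, if ((k':ℤ)-(k:ℤ))^2 + ((l':ℤ)-(l:ℤ))^2 = 1
              then |B k l - B k' l'| ^ p else 0)
          = ∑ l' : Fin m,
              ((if (((k':ℤ)-(k:ℤ))^2 = 1 ∧ l' = l) then |B k l - B k' l'| ^ p else 0)
              + (if (k' = k ∧ ((l':ℤ)-(l:ℤ))^2 = 1) then |B k l - B k' l'| ^ p else 0)) :=
        Finset.sum_congr rfl fun l' _ => e1 l'
      rw [e2, Finset.sum_add_distrib]
      congr 1
      · exact sum_collapse'' _ l _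
      · by_cases hk : k' = k <;> simp [hk]
    calc (∑ k' : Fin n, ∑ l' : Fin m,
          if ((k':ℤ)-(k:ℤ))^2 + ((l':ℤ)-(l:ℤ))^2 = 1 then |B k l - B k' l'| ^ p else 0)
        = ∑ k' : Fin n,
            ((if ((k':ℤ)-(k:ℤ))^2 = 1 then |B k l - B k' l| ^ p else 0)
              + (if k' = k then
                  (∑ l' : Fin m, if ((l':ℤ)-(l:ℤ))^2 = 1 then |B k l - B k' l'| ^ p else 0)
                else 0)) := Finset.sum_congr rfl fun k' _ => step1 k'
      _ = _ := by
          rw [Finset.sum_add_distrib]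
          congr 1
          simp
  unfold stressVN
  calc (∑ k : Fin n, ∑ l : Fin m, ∑ k' : Fin n, ∑ l' : Fin m,
        if ((k' : ℤ) - (k : ℤ)) ^ 2 + ((l' : ℤ) - (l : ℤ)) ^ 2 = 1
          then |B k l - B k' l'| ^ p else 0)
      = ∑ k : Fin n, ∑ l : Fin m,
          ((∑ k' : Fin n, if ((k':ℤ)-(k:ℤ))^2 = 1 then |B k l - B k' l| ^ p else 0)
            + (∑ l' : Fin m, if ((l':ℤ)-(l:ℤ))^2 = 1 then |B k l - B k l'| ^ p else 0)) := by
        exact Finset.sum_congr rfl fun k _ => Finset.sum_congr rfl fun l _ => inner k l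
    _ = (∑ k : Fin n, ∑ l : Fin m, ∑ k' : Fin n,
          if ((k':ℤ)-(k:ℤ))^2 = 1 then |B k l - B k' l| ^ p else 0)
        + (∑ k : Fin n, ∑ l : Fin m, ∑ l' : Fin m,
          if ((l':ℤ)-(l:ℤ))^2 = 1 then |B k l - B k l'| ^ p else 0) := by
        simp [Finset.sum_add_distrib]
    _ = _ := by
        congr 1
        · refine Finset.sum_congr rfl fun k _ => ?_
          rw [Finset.sum_comm]
          refine Finset.sum_congr rfl fun k' _ => ?_
          by_cases hc : ((k':ℤ)-(k:ℤ))^2 = 1 <;> simp [hc]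
        · rw [Finset.sum_comm]
          refine Finset.sum_congr rfl fun l _ => ?_
          rw [Finset.sum_comm]
          refine Finset.sum_congr rfl fun l' _ => ?_
          by_cases hc : ((l':ℤ)-(l:ℤ))^2 = 1 <;> simp [hc]

lemma stress_decomp (n m : ℕ) (p : ℝ) (A : Fin n → Fin m → ℝ)
    (σr : Equiv.Perm (Fin n)) (σc : Equiv.Perm (Fin m)) :
    stressVN n m p (fun k l => A (σr.symm k) (σc.symm l)) =
      pathWeight n (fun i k => 2 * ∑ j : Fin m, |A i j - A k j| ^ p) σr +
      pathWeight m (fun j l => 2 * ∑ i : Fin n, |A i j - A i l| ^ p) σc := by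
  rw [stress_split]
  congr 1
  · have hg : ∀ a b : Fin n,
        (∑ j : Fin m, |A (σr.symm a) j - A (σr.symm b) j| ^ p)
        = (∑ j : Fin m, |A (σr.symm b) j - A (σr.symm a) j| ^ p) := fun a b =>
      Finset.sum_congr rfl fun j _ => by rw [abs_sub_comm]
    have h1 : (∑ k : Fin n, ∑ k' : Fin n, if ((k':ℤ)-(k:ℤ))^2 = 1
          then (∑ l : Fin m, |A (σr.symm k) (σc.symm l) - A (σr.symm k') (σc.symm l)| ^ p)
          else 0)
        = ∑ k : Fin n, ∑ k' : Fin n, if ((k':ℤ)-(k:ℤ))^2 = 1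
            then (∑ j : Fin m, |A (σr.symm k) j - A (σr.symm k') j| ^ p) else 0 := by
      refine Finset.sum_congr rfl fun k _ => Finset.sum_congr rfl fun k' _ => ?_
      congr 1
      exact Equiv.sum_comp σc.symm
        (fun j => |A (σr.symm k) j - A (σr.symm k') j| ^ p)
    rw [h1, pair_sum n
      (fun a b => ∑ j : Fin m, |A (σr.symm a) j - A (σr.symm b) j| ^ p) hg,
      pathWeight_reindex]
  · have hg : ∀ a b : Fin m,
        (∑ i : Fin n, |A i (σc.symm a) - A i (σc.symm b)| ^ p)
        = (∑ i : Fin n, |A i (σc.symm b) - A i (σc.symm a)| ^ p) := fun a b =>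
      Finset.sum_congr rfl fun i _ => by rw [abs_sub_comm]
    have h1 : (∑ l : Fin m, ∑ l' : Fin m, if ((l':ℤ)-(l:ℤ))^2 = 1
          then (∑ k : Fin n, |A (σr.symm k) (σc.symm l) - A (σr.symm k) (σc.symm l')| ^ p)
          else 0)
        = ∑ l : Fin m, ∑ l' : Fin m, if ((l':ℤ)-(l:ℤ))^2 = 1
            then (∑ i : Fin n, |A i (σc.symm l) - A i (σc.symm l')| ^ p) else 0 := by
      refine Finset.sum_congr rfl fun l _ => Finset.sum_congr rfl fun l' _ => ?_
      congr 1
      exact Equiv.sum_comp σr.symm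
        (fun i => |A i (σc.symm l) - A i (σc.symm l')| ^ p)
    rw [h1, pair_sum m
      (fun a b => ∑ i : Fin n, |A i (σc.symm a) - A i (σc.symm b)| ^ p) hg,
      pathWeight_reindex]

/-- Minimizing the total ℓᵖ von Neumann stress over all `(σr, σc)` is equivalent to
independently finding minimum-weight Hamiltonian paths on rows (weights
`ω i k = 2 Σ_j |a_{ij} − a_{kj}|ᵖ`) and on columns (weights
`τ j ℓ = 2 Σ_i |a_{ij} − a_{iℓ}|ᵖ`), the minima being attained and the optimal
stress equal to the sum of the two minimum path weights. -/
theorem stressVN_min_eq_hamiltonian_paths (n m : ℕ) (hn : 1 ≤ n) (hm : 1 ≤ m)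
    (p : ℝ) (hp : 1 ≤ p) (A : Fin n → Fin m → ℝ) :
    (∃ (σr : Equiv.Perm (Fin n)) (σc : Equiv.Perm (Fin m)),
      stressVN n m p (fun k l => A (σr.symm k) (σc.symm l)) =
        sInf {s : ℝ | ∃ (σr : Equiv.Perm (Fin n)) (σc : Equiv.Perm (Fin m)),
          s = stressVN n m p (fun k l => A (σr.symm k) (σc.symm l))}) ∧
    sInf {s : ℝ | ∃ (σr : Equiv.Perm (Fin n)) (σc : Equiv.Perm (Fin m)),
        s = stressVN n m p (fun k l => A (σr.symm k) (σc.symm l))} =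
      sInf {w : ℝ | ∃ σr : Equiv.Perm (Fin n),
          w = pathWeight n (fun i k => 2 * ∑ j : Fin m, |A i j - A k j| ^ p) σr}
      + sInf {w : ℝ | ∃ σc : Equiv.Perm (Fin m),
          w = pathWeight m (fun j l => 2 * ∑ i : Fin n, |A i j - A i l| ^ p) σc} := by
  set ω : Fin n → Fin n → ℝ := fun i k => 2 * ∑ j : Fin m, |A i j - A k j| ^ p with hω
  set τ : Fin m → Fin m → ℝ := fun j l => 2 * ∑ i : Fin n, |A i j - A i l| ^ p with hτ
  set Wr : Set ℝ := {w : ℝ | ∃ σr : Equiv.Perm (Fin n), w = pathWeight n ω σr} with hWr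
  set Wc : Set ℝ := {w : ℝ | ∃ σc : Equiv.Perm (Fin m), w = pathWeight m τ σc} with hWc
  set S : Set ℝ := {s : ℝ | ∃ (σr : Equiv.Perm (Fin n)) (σc : Equiv.Perm (Fin m)),
      s = stressVN n m p (fun k l => A (σr.symm k) (σc.symm l))} with hS
  have hWrfin : Wr.Finite := by
    have : Wr = Set.range (pathWeight n ω) := by
      ext x; simp [hWr, eq_comm, Set.range]
    rw [this]; exact Set.finite_range _
  have hWcfin : Wc.Finite := by
    have : Wc = Set.range (pathWeight m τ) := by
      ext x; simp [hWc, eq_comm, Set.range]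
    rw [this]; exact Set.finite_range _
  have hWrne : Wr.Nonempty := ⟨pathWeight n ω 1, 1, rfl⟩
  have hWcne : Wc.Nonempty := ⟨pathWeight m τ 1, 1, rfl⟩
  obtain ⟨σr0, hσr0⟩ := hWrne.csInf_mem hWrfin
  obtain ⟨σc0, hσc0⟩ := hWcne.csInf_mem hWcfin
  have hleast : IsLeast S (sInf Wr + sInf Wc) := by
    constructor
    · exact ⟨σr0, σc0, by rw [stress_decomp, ← hσr0, ← hσc0]⟩
    · rintro s ⟨σr, σc, rfl⟩
      rw [stress_decomp]
      exact add_le_add (csInf_le hWrfin.bddBelow ⟨σr, rfl⟩)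
        (csInf_le hWcfin.bddBelow ⟨σc, rfl⟩)
  have hSval : sInf S = sInf Wr + sInf Wc := hleast.csInf_eq
  refine ⟨⟨σr0, σc0, ?_⟩, hSval⟩
  rw [stress_decomp, hSval, ← hσr0, ← hσc0]
end

section
/- Maximizing McCormick's Measure of Effectiveness ME(B) = (1/2)[Σ_{k,ℓ} b_{kℓ}(b_{k,ℓ+1}+b_{k,ℓ−1}) + Σ_{k,ℓ} b_{kℓ}(b_{k+1,ℓ}+b_{k−1,ℓ})] over all row and column permutations of A is equivalent to finding a maximum-weight Hamiltonian path on the rows with edge weights ω^{ME}_{ik} = Σ_j a_{ij}a_{kj}, and a maximum-weight Hamiltonian path on the columns with edge weights τ^{ME}_{jℓ} = Σ_i a_{ij}a_{iℓ}; the optimal ME value equals the sum of the two maximum path weights. -/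
open Finset

/-- Extension of a matrix to integer indices; out-of-range entries are `0`. -/
noncomputable def extM (n m : ℕ) (B : Fin n → Fin m → ℝ) (k l : ℤ) : ℝ :=
  if h : 0 ≤ k ∧ k < n ∧ 0 ≤ l ∧ l < m then
    B ⟨k.toNat, by omega⟩ ⟨l.toNat, by omega⟩
  else 0

/-- McCormick's Measure of Effectiveness of `B ∈ ℝ^{n×m}` (out-of-range entries 0). -/
noncomputable def ME (n m : ℕ) (B : Fin n → Fin m → ℝ) : ℝ :=
  (1 / 2) * (∑ k : Fin n, ∑ l : Fin m,
      B k l * (extM n m B (k : ℤ) ((l : ℤ) + 1) + extM n m B (k : ℤ) ((l : ℤ) - 1)))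
  + (1 / 2) * (∑ k : Fin n, ∑ l : Fin m,
      B k l * (extM n m B ((k : ℤ) + 1) (l : ℤ) + extM n m B ((k : ℤ) - 1) (l : ℤ)))

lemma extM_eq (n m : ℕ) (B : Fin n → Fin m → ℝ) (k l : ℕ) (hk : k < n) (hl : l < m) :
    extM n m B (k : ℤ) (l : ℤ) = B ⟨k, hk⟩ ⟨l, hl⟩ := by
  rw [extM, dif_pos (by omega)]
  simp

lemma extM_neg (n m : ℕ) (B : Fin n → Fin m → ℝ) (k l : ℤ)
    (h : ¬(0 ≤ k ∧ k < n ∧ 0 ≤ l ∧ l < m)) : extM n m B k l = 0 := dif_neg h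

lemma extM_fin (n m : ℕ) (B : Fin n → Fin m → ℝ) (k : Fin n) (l : Fin m) :
    extM n m B (k : ℤ) (l : ℤ) = B k l := by
  rw [extM_eq n m B k l k.isLt l.isLt]

lemma half_col (n m : ℕ) (B : Fin n → Fin m → ℝ) :
    (1/2) * (∑ k : Fin n, ∑ l : Fin m,
        B k l * (extM n m B (k : ℤ) ((l : ℤ) + 1) + extM n m B (k : ℤ) ((l : ℤ) - 1)))
    = ∑ k : Fin n, ∑ p ∈ Finset.range (m-1),
        extM n m B (k : ℤ) (p : ℤ) * extM n m B (k : ℤ) ((p : ℤ) + 1) := by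
  have key : ∀ k : Fin n, ∑ l : Fin m,
      B k l * (extM n m B (k : ℤ) ((l : ℤ) + 1) + extM n m B (k : ℤ) ((l : ℤ) - 1))
      = 2 * ∑ p ∈ Finset.range (m-1),
          extM n m B (k : ℤ) (p : ℤ) * extM n m B (k : ℤ) ((p : ℤ) + 1) := by
    intro k
    rcases Nat.eq_zero_or_pos m with hm | hm
    · subst hm; simp
    obtain ⟨m', rfl⟩ : ∃ m', m = m' + 1 := ⟨m - 1, by omega⟩
    have h1 : ∑ l : Fin (m'+1),
        B k l * (extM n (m'+1) B (k : ℤ) ((l : ℤ) + 1) + extM n (m'+1) B (k : ℤ) ((l : ℤ) - 1))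
        = ∑ p ∈ Finset.range (m'+1),
            (extM n (m'+1) B (k : ℤ) (p : ℤ) * extM n (m'+1) B (k : ℤ) ((p : ℤ) + 1)
           + extM n (m'+1) B (k : ℤ) (p : ℤ) * extM n (m'+1) B (k : ℤ) ((p : ℤ) - 1)) := by
      rw [← Fin.sum_univ_eq_sum_range (fun p =>
        extM n (m'+1) B (k : ℤ) (p : ℤ) * extM n (m'+1) B (k : ℤ) ((p : ℤ) + 1)
        + extM n (m'+1) B (k : ℤ) (p : ℤ) * extM n (m'+1) B (k : ℤ) ((p : ℤ) - 1))]
      refine Finset.sum_congr rfl (fun l _ => ?_)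
      rw [← extM_fin n (m'+1) B k l]
      ring
    have hb : ∑ p ∈ Finset.range (m'+1),
        extM n (m'+1) B (k : ℤ) (p : ℤ) * extM n (m'+1) B (k : ℤ) ((p : ℤ) - 1)
        = ∑ p ∈ Finset.range m',
            extM n (m'+1) B (k : ℤ) (p : ℤ) * extM n (m'+1) B (k : ℤ) ((p : ℤ) + 1) := by
      rw [Finset.sum_range_succ']
      have hz2 : extM n (m'+1) B (k : ℤ) (((0:ℕ) : ℤ) - 1) = 0 := by
        apply extM_neg; intro h; omega
      simp only [hz2, mul_zero, add_zero]
      refine Finset.sum_congr rfl fun p _ => ?_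
      have hc : ((p + 1 : ℕ) : ℤ) - 1 = (p : ℤ) := by push_cast; ring
      rw [hc]
      push_cast
      ring
    rw [h1, Finset.sum_add_distrib, hb, Finset.sum_range_succ]
    have hz1 : extM n (m'+1) B (k : ℤ) ((m' : ℤ) + 1) = 0 := by
      apply extM_neg; intro h; omega
    simp only [hz1, mul_zero, add_zero, Nat.add_sub_cancel]
    ring
  rw [Finset.sum_congr rfl (fun k _ => key k), Finset.mul_sum]
  refine Finset.sum_congr rfl (fun k _ => by ring)

lemma pathWeight_eq (m : ℕ) (τ : Fin m → Fin m → ℝ) (σ : Equiv.Perm (Fin m)) :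
    pathWeight m τ σ = ∑ p ∈ Finset.range (m-1),
      extM m m (fun i k => τ (σ.symm i) (σ.symm k)) (p : ℤ) ((p : ℤ) + 1) := by
  set u : Fin m → Fin m → ℝ := fun i k => τ (σ.symm i) (σ.symm k) with hu
  have h1 : pathWeight m τ σ
      = ∑ i : Fin m, ∑ k : Fin m, (if (k:ℕ) = (i:ℕ) + 1 then u i k else 0) := by
    rw [pathWeight,
      ← Equiv.sum_comp σ.symm (fun i => ∑ k : Fin m, if (σ k:ℕ) = (σ i:ℕ)+1 then τ i k else 0)]
    refine Finset.sum_congr rfl fun i _ => ?_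
    rw [← Equiv.sum_comp σ.symm
      (fun k => if (σ k:ℕ) = (σ (σ.symm i):ℕ)+1 then τ (σ.symm i) k else 0)]
    simp [hu]
  have h2 : ∀ i : Fin m, (∑ k : Fin m, if (k:ℕ) = (i:ℕ) + 1 then u i k else 0)
      = extM m m u (((i:ℕ):ℕ) : ℤ) ((((i:ℕ):ℕ) : ℤ) + 1) := by
    intro i
    by_cases h : (i:ℕ) + 1 < m
    · rw [Finset.sum_eq_single (⟨(i:ℕ)+1, h⟩ : Fin m)]
      · rw [if_pos rfl,
          show ((((i:ℕ):ℕ):ℤ) + 1) = ((((i:ℕ)+1 : ℕ)) : ℤ) by push_cast; ring,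
          extM_eq m m u (i:ℕ) ((i:ℕ)+1) i.isLt h]
      · intro b _ hb
        rw [if_neg]
        intro hc; exact hb (Fin.ext hc)
      · simp
    · rw [Finset.sum_eq_zero, extM_neg]
      · intro hc; omega
      · intro b _
        rw [if_neg]
        have := b.isLt; omega
  rw [h1, Finset.sum_congr rfl (fun i _ => h2 i),
    Fin.sum_univ_eq_sum_range (fun p => extM m m u ((p:ℕ) : ℤ) (((p:ℕ) : ℤ) + 1))]
  rcases Nat.eq_zero_or_pos m with hm | hm
  · subst hm; simp
  obtain ⟨m', rfl⟩ : ∃ m', m = m' + 1 := ⟨m - 1, by omega⟩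
  rw [Finset.sum_range_succ]
  have hz : extM (m'+1) (m'+1) u ((m' : ℕ) : ℤ) (((m' : ℕ) : ℤ) + 1) = 0 := by
    apply extM_neg; intro h; omega
  rw [hz, add_zero]
  simp

lemma col_sum (n m : ℕ) (A : Fin n → Fin m → ℝ)
    (σr : Equiv.Perm (Fin n)) (σc : Equiv.Perm (Fin m)) :
    (1/2) * (∑ k : Fin n, ∑ l : Fin m,
        A (σr.symm k) (σc.symm l) *
          (extM n m (fun k l => A (σr.symm k) (σc.symm l)) (k : ℤ) ((l : ℤ) + 1)
           + extM n m (fun k l => A (σr.symm k) (σc.symm l)) (k : ℤ) ((l : ℤ) - 1)))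
    = pathWeight m (fun j l => ∑ i : Fin n, A i j * A i l) σc := by
  set B : Fin n → Fin m → ℝ := fun k l => A (σr.symm k) (σc.symm l) with hB
  set u : Fin m → Fin m → ℝ :=
    fun j l => ∑ i : Fin n, A i (σc.symm j) * A i (σc.symm l) with hu
  rw [half_col n m B, pathWeight_eq, Finset.sum_comm]
  refine Finset.sum_congr rfl fun p hp => ?_
  have hp1 : p + 1 < m := by have := Finset.mem_range.1 hp; omega
  have hp0 : p < m := by omega
  have hcast : ((p:ℤ) + 1) = (((p+1 : ℕ)) : ℤ) := by push_cast; ring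
  calc ∑ k : Fin n, extM n m B (k : ℤ) (p : ℤ) * extM n m B (k : ℤ) ((p:ℤ) + 1)
      = ∑ k : Fin n, B k ⟨p, hp0⟩ * B k ⟨p+1, hp1⟩ := by
        refine Finset.sum_congr rfl fun k _ => ?_
        rw [hcast, extM_eq n m B (k:ℕ) p k.isLt hp0,
          extM_eq n m B (k:ℕ) (p+1) k.isLt hp1]
    _ = ∑ i : Fin n, A i (σc.symm ⟨p, hp0⟩) * A i (σc.symm ⟨p+1, hp1⟩) := by
        rw [← Equiv.sum_comp σr.symm
          (fun i => A i (σc.symm ⟨p, hp0⟩) * A i (σc.symm ⟨p+1, hp1⟩))]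
    _ = extM m m u (p : ℤ) ((p:ℤ) + 1) := by
        rw [hcast, extM_eq m m u p (p+1) hp0 hp1]

lemma extM_transpose (n m : ℕ) (B : Fin n → Fin m → ℝ) (k l : ℤ) :
    extM m n (fun l k => B k l) l k = extM n m B k l := by
  unfold extM
  split_ifs with h1 h2 h2 <;> first | rfl | omega

lemma row_sum (n m : ℕ) (A : Fin n → Fin m → ℝ)
    (σr : Equiv.Perm (Fin n)) (σc : Equiv.Perm (Fin m)) :
    (1/2) * (∑ k : Fin n, ∑ l : Fin m,
        A (σr.symm k) (σc.symm l) *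
          (extM n m (fun k l => A (σr.symm k) (σc.symm l)) ((k : ℤ) + 1) (l : ℤ)
           + extM n m (fun k l => A (σr.symm k) (σc.symm l)) ((k : ℤ) - 1) (l : ℤ)))
    = pathWeight n (fun i k => ∑ j : Fin m, A i j * A k j) σr := by
  have h := col_sum m n (fun j i => A i j) σc σr
  rw [Finset.sum_comm, ← h]
  congr 1
  refine Finset.sum_congr rfl fun l _ => Finset.sum_congr rfl fun k _ => ?_
  simp only [← extM_transpose n m (fun k l => A (σr.symm k) (σc.symm l))]

lemma ME_eq (n m : ℕ) (A : Fin n → Fin m → ℝ)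
    (σr : Equiv.Perm (Fin n)) (σc : Equiv.Perm (Fin m)) :
    ME n m (fun k l => A (σr.symm k) (σc.symm l))
      = pathWeight n (fun i k => ∑ j : Fin m, A i j * A k j) σr
        + pathWeight m (fun j l => ∑ i : Fin n, A i j * A i l) σc := by
  rw [ME, col_sum n m A σr σc, row_sum n m A σr σc, add_comm]

/-- Maximizing the Measure of Effectiveness over all row and column permutations of
`A` is equivalent to finding a maximum-weight Hamiltonian path on the rows with
weights `ω^{ME}_{ik} = Σ_j a_{ij} a_{kj}` and one on the columns with weights
`τ^{ME}_{jℓ} = Σ_i a_{ij} a_{iℓ}`; the maxima are attained and the optimal ME value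
is the sum of the two maximum path weights. -/
theorem ME_max_eq_hamiltonian_paths (n m : ℕ) (hn : 1 ≤ n) (hm : 1 ≤ m)
    (A : Fin n → Fin m → ℝ) :
    (∃ (σr : Equiv.Perm (Fin n)) (σc : Equiv.Perm (Fin m)),
      ME n m (fun k l => A (σr.symm k) (σc.symm l)) =
        sSup {s : ℝ | ∃ (σr : Equiv.Perm (Fin n)) (σc : Equiv.Perm (Fin m)),
          s = ME n m (fun k l => A (σr.symm k) (σc.symm l))}) ∧
    sSup {s : ℝ | ∃ (σr : Equiv.Perm (Fin n)) (σc : Equiv.Perm (Fin m)),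
        s = ME n m (fun k l => A (σr.symm k) (σc.symm l))} =
      sSup {w : ℝ | ∃ σr : Equiv.Perm (Fin n),
          w = pathWeight n (fun i k => ∑ j : Fin m, A i j * A k j) σr}
      + sSup {w : ℝ | ∃ σc : Equiv.Perm (Fin m),
          w = pathWeight m (fun j l => ∑ i : Fin n, A i j * A i l) σc} := by
  obtain ⟨σr0, hr0⟩ := Finite.exists_max
    (fun σr : Equiv.Perm (Fin n) => pathWeight n (fun i k => ∑ j : Fin m, A i j * A k j) σr)
  obtain ⟨σc0, hc0⟩ := Finite.exists_max
    (fun σc : Equiv.Perm (Fin m) => pathWeight m (fun j l => ∑ i : Fin n, A i j * A i l) σc)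
  have hgr : IsGreatest {w : ℝ | ∃ σr : Equiv.Perm (Fin n),
      w = pathWeight n (fun i k => ∑ j : Fin m, A i j * A k j) σr}
      (pathWeight n (fun i k => ∑ j : Fin m, A i j * A k j) σr0) :=
    ⟨⟨σr0, rfl⟩, by rintro w ⟨σ, rfl⟩; exact hr0 σ⟩
  have hgc : IsGreatest {w : ℝ | ∃ σc : Equiv.Perm (Fin m),
      w = pathWeight m (fun j l => ∑ i : Fin n, A i j * A i l) σc}
      (pathWeight m (fun j l => ∑ i : Fin n, A i j * A i l) σc0) :=
    ⟨⟨σc0, rfl⟩, by rintro w ⟨σ, rfl⟩; exact hc0 σ⟩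
  have hgs : IsGreatest {s : ℝ | ∃ (σr : Equiv.Perm (Fin n)) (σc : Equiv.Perm (Fin m)),
      s = ME n m (fun k l => A (σr.symm k) (σc.symm l))}
      (pathWeight n (fun i k => ∑ j : Fin m, A i j * A k j) σr0
        + pathWeight m (fun j l => ∑ i : Fin n, A i j * A i l) σc0) := by
    constructor
    · exact ⟨σr0, σc0, (ME_eq n m A σr0 σc0).symm⟩
    · rintro s ⟨σr, σc, rfl⟩
      rw [ME_eq n m A σr σc]
      exact add_le_add (hr0 σr) (hc0 σc)
  refine ⟨⟨σr0, σc0, ?_⟩, ?_⟩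
  · rw [hgs.csSup_eq, ME_eq n m A σr0 σc0]
  · rw [hgs.csSup_eq, hgr.csSup_eq, hgc.csSup_eq]
end
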